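/- Let a ∈ (1/2, 1) and h > 0. For 0 ≤ t_i < t_i + h ≤ t_j, s ∈ (t_i, t_i+h], τ ∈ (t_j, t_j+h] with t_j − t_i ≥ 2h (i.e., j > i+1), and ε ∈ (0, 2a−1): ∫_{t_i}^{s} (s−u)^{a−1} ((t_j−u)^{a−1} − (τ−u)^{a−1}) du ≤ C h^{2a−ε} (τ−s)^{ε−1}, where C depends only on a, ε and an upper bound T on all times, using the mean value theorem bound (t_j−u)^{a−1} − (τ−u)^{a−1} ≤ (τ−t_j)(1−a)(t_j−u)^{a−2} and τ − s ≤ 2(t_j−u) for u ∈ [t_i, s]. -/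

import Mathlib

open MeasureTheory intervalIntegral

/-- Convexity-type bound: for `-1 < p < 0` and `0 < x ≤ y`,
`x ^ p - y ^ p ≤ (y - x) * (-p) * x ^ (p - 1)`. -/
lemma rpow_sub_rpow_le (p x y : ℝ) (hp : -1 < p) (hp0 : p < 0) (hx : 0 < x)
    (hxy : x ≤ y) : x ^ p - y ^ p ≤ (y - x) * (-p) * x ^ (p - 1) := by
  have hy : 0 < y := lt_of_lt_of_le hx hxy
  have h0 : (0 : ℝ) ∉ Set.uIcc x y := by
    rw [Set.uIcc_of_le hxy]
    intro h
    exact absurd h.1 (not_le.mpr hx)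
  have hint : (∫ t in x..y, t ^ (p - 1)) = (y ^ p - x ^ p) / p := by
    rw [integral_rpow (Or.inr ⟨by linarith, h0⟩)]
    norm_num
  have hmono : (∫ t in x..y, t ^ (p - 1)) ≤ (y - x) * x ^ (p - 1) := by
    have : (∫ t in x..y, t ^ (p - 1)) ≤ ∫ _ in x..y, x ^ (p - 1) := by
      apply intervalIntegral.integral_mono_on hxy
      · exact intervalIntegrable_rpow (Or.inr h0)
      · exact intervalIntegrable_const
      · intro t ht
        exact Real.rpow_le_rpow_of_nonpos hx ht.1 (by linarith)
    simpa [mul_comm] using this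
  rw [hint] at hmono
  rw [div_le_iff_of_neg hp0] at hmono
  nlinarith [hmono]

theorem stmt_14 (a T ε : ℝ) (ha : 1 / 2 < a) (ha1 : a < 1) (hT : 0 < T)
    (hε : 0 < ε) (hε1 : ε < 2 * a - 1) :
    ∃ C > (0 : ℝ), ∀ h ti tj s τ : ℝ, 0 < h → 0 ≤ ti → 2 * h ≤ tj - ti →
      ti < s → s ≤ ti + h → tj < τ → τ ≤ tj + h → τ ≤ T →
      (∫ u in ti..s, (s - u) ^ (a - 1) * ((tj - u) ^ (a - 1) - (τ - u) ^ (a - 1)))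
        ≤ C * h ^ (2 * a - ε) * (τ - s) ^ (ε - 1) := by
  have ha0 : 0 < a := by linarith
  have h1a : (0:ℝ) < 1 - a := by linarith
  refine ⟨(1 - a) * 2 ^ (1 - ε) / a, by positivity, ?_⟩
  intro h ti tj s τ hh hti h2h his hsh hjτ hτj hτT
  set C : ℝ := (1 - a) * 2 ^ (1 - ε) / a with hC
  set K : ℝ := (1 - a) * 2 ^ (1 - ε) * h ^ (a - ε) * (τ - s) ^ (ε - 1) with hK
  have hts : h ≤ tj - s := by linarith
  have hτs : 0 < τ - s := by linarith
  have h1a : (0:ℝ) < 1 - a := by linarith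
  have hKpos : 0 ≤ K := by positivity
  -- pointwise bound
  have hpt : ∀ u ∈ Set.Icc ti s,
      (s - u) ^ (a - 1) * ((tj - u) ^ (a - 1) - (τ - u) ^ (a - 1))
        ≤ (s - u) ^ (a - 1) * K := by
    intro u hu
    have hju : h ≤ tj - u := by linarith [hu.2]
    have hju0 : (0:ℝ) < tj - u := by linarith
    apply mul_le_mul_of_nonneg_left _ (Real.rpow_nonneg (by linarith [hu.2]) _)
    have hkey := rpow_sub_rpow_le (a - 1) (tj - u) (τ - u) (by linarith) (by linarith)
      hju0 (by linarith)
    have e1 : (τ - u) - (tj - u) = τ - tj := by ring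
    have e2 : -(a - 1) = 1 - a := by ring
    have e3 : a - 1 - 1 = a - 2 := by ring
    rw [e1, e2, e3] at hkey
    refine le_trans hkey ?_
    have hsplit : (tj - u) ^ (a - 2) = (tj - u) ^ (ε - 1) * (tj - u) ^ (a - 1 - ε) := by
      rw [← Real.rpow_add hju0]; ring_nf
    have hb1 : (tj - u) ^ (ε - 1) ≤ ((τ - s) / 2) ^ (ε - 1) := by
      apply Real.rpow_le_rpow_of_nonpos (by linarith) _ (by linarith)
      linarith [hu.2]
    have hb2 : (tj - u) ^ (a - 1 - ε) ≤ h ^ (a - 1 - ε) :=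
      Real.rpow_le_rpow_of_nonpos hh hju (by linarith)
    have hdiv : ((τ - s) / 2) ^ (ε - 1) = (τ - s) ^ (ε - 1) * 2 ^ (1 - ε) := by
      rw [Real.div_rpow (le_of_lt hτs) (by norm_num), div_eq_mul_inv,
        ← Real.rpow_neg (by norm_num : (0:ℝ) ≤ 2)]
      ring_nf
    have hτtj : τ - tj ≤ h := by linarith
    have hhh : h * h ^ (a - 1 - ε) = h ^ (a - ε) := by
      rw [show a - ε = 1 + (a - 1 - ε) by ring, Real.rpow_add hh, Real.rpow_one]
    calc (τ - tj) * (1 - a) * (tj - u) ^ (a - 2)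
        = (τ - tj) * (1 - a) * ((tj - u) ^ (ε - 1) * (tj - u) ^ (a - 1 - ε)) := by
          rw [hsplit]
      _ ≤ h * (1 - a) * (((τ - s) / 2) ^ (ε - 1) * h ^ (a - 1 - ε)) := by
          apply mul_le_mul
          · exact mul_le_mul_of_nonneg_right hτtj (by linarith)
          · exact mul_le_mul hb1 hb2 (Real.rpow_nonneg hju0.le _)
              (Real.rpow_nonneg (by positivity) _)
          · positivity
          · positivity
      _ = K := by rw [hdiv, hK, ← hhh]; ring
  -- integrability
  have hint1 : IntervalIntegrable (fun u => (s - u) ^ (a - 1)) volume ti s := by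
    have := (intervalIntegrable_rpow' (by linarith : (-1:ℝ) < a - 1)
      (a := 0) (b := s - ti)).comp_sub_left s
    simpa using this.symm
  have hint2 : IntervalIntegrable
      (fun u => (s - u) ^ (a - 1) * ((tj - u) ^ (a - 1) - (τ - u) ^ (a - 1)))
      volume ti s := by
    apply hint1.mul_continuousOn
    apply ContinuousOn.sub
    · apply ContinuousOn.rpow_const (continuousOn_const.sub continuousOn_id)
      intro u hu
      rw [Set.uIcc_of_le his.le] at hu
      exact Or.inl (by intro hzero; simp only [Pi.sub_apply, id_eq] at hzero; linarith [hu.2])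
    · apply ContinuousOn.rpow_const (continuousOn_const.sub continuousOn_id)
      intro u hu
      rw [Set.uIcc_of_le his.le] at hu
      exact Or.inl (by intro hzero; simp only [Pi.sub_apply, id_eq] at hzero; linarith [hu.2])
  have hint3 : IntervalIntegrable (fun u => (s - u) ^ (a - 1) * K) volume ti s :=
    hint1.mul_const K
  have hmono := intervalIntegral.integral_mono_on his.le hint2 hint3 hpt
  refine le_trans hmono ?_
  have hval : (∫ u in ti..s, (s - u) ^ (a - 1)) = (s - ti) ^ a / a := by
    have := intervalIntegral.integral_comp_sub_left (fun v => v ^ (a - 1)) s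
      (a := ti) (b := s)
    rw [this, sub_self, integral_rpow (Or.inl (by linarith))]
    rw [Real.zero_rpow (by linarith : a - 1 + 1 ≠ 0)]
    norm_num
  rw [intervalIntegral.integral_mul_const, hval]
  have hsa : (s - ti) ^ a ≤ h ^ a :=
    Real.rpow_le_rpow (by linarith) (by linarith) ha0.le
  have hpow : h ^ (a - ε) * h ^ a = h ^ (2 * a - ε) := by
    rw [← Real.rpow_add hh]; ring_nf
  calc (s - ti) ^ a / a * K ≤ h ^ a / a * K := by
        apply mul_le_mul_of_nonneg_right _ hKpos
        exact div_le_div_of_nonneg_right hsa ha0.le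
    _ = C * h ^ (2 * a - ε) * (τ - s) ^ (ε - 1) := by
        rw [hK, hC, ← hpow]; ring
  done
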